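/- Let G be a finite abelian group, H ≤ G a subgroup, and let φ : Ĝ → Ĥ be the restriction map on characters. Let S ⊆ H and T ⊆ Ĥ be nonempty. Then S and T are formally dual (as subsets of H and Ĥ) if and only if S ⊆ G and φ⁻¹(T) ⊆ Ĝ are formally dual (as subsets of G and Ĝ). -/

import Mathlib

open scoped Classical

/-- Formal duality condition for `S ⊆ G` and `T ⊆ Ĝ` (with the roles of the two groups as in
Lemma `liftingequiv`): for all `x ∈ G`,
`|(1/|T|) ∑_{w ∈ T} w(x)|² = (1/|S|)·#{(v,v') ∈ S × S : x = v - v'}`.  Here the dual group `Ĝ`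
is realized as the group `AddChar G ℂ` of complex-valued characters, written additively. -/
def IsFormallyDual {G : Type*} [AddCommGroup G] [Fintype G]
    (S : Finset G) (T : Finset (AddChar G ℂ)) : Prop :=
  ∀ x : G,
    ‖(T.card : ℂ)⁻¹ * ∑ w ∈ T, w x‖ ^ 2 =
      (S.card : ℝ)⁻¹ * ((S ×ˢ S).filter fun p => x = p.1 - p.2).card

open Finset

namespace FormalDualAux

variable {G : Type*} [AddCommGroup G] [Fintype G] (H : AddSubgroup G)

/-- The restriction homomorphism on characters. -/
noncomputable def resHom : AddChar G ℂ →+ AddChar H ℂ where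
  toFun y := y.compAddMonoidHom H.subtype
  map_zero' := rfl
  map_add' _ _ := rfl

@[simp] lemma resHom_apply (y : AddChar G ℂ) (h : H) : resHom H y h = y (h : G) := rfl

/-- Inflation of characters from the quotient. -/
noncomputable def quotHom : AddChar (G ⧸ H) ℂ →+ AddChar G ℂ where
  toFun χ := χ.compAddMonoidHom (QuotientAddGroup.mk' H)
  map_zero' := rfl
  map_add' _ _ := rfl

@[simp] lemma quotHom_apply (χ : AddChar (G ⧸ H) ℂ) (x : G) :
    quotHom H χ x = χ (QuotientAddGroup.mk' H x) := rfl

lemma quotHom_injective : Function.Injective (quotHom H) :=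
  AddChar.compAddMonoidHom_injective_left _ (QuotientAddGroup.mk'_surjective H)

lemma mem_range_quotHom {y : AddChar G ℂ} :
    y ∈ (quotHom H).range ↔ resHom H y = 0 := by
  constructor
  · rintro ⟨χ, rfl⟩
    ext h
    have h0 : (QuotientAddGroup.mk' H : G →+ G ⧸ H) (h : G) = 0 :=
      (QuotientAddGroup.eq_zero_iff _).2 h.2
    simp [h0]
  · intro hy
    have hy' : ∀ h : H, y (h : G) = 1 := by
      intro h
      have := DFunLike.congr_fun hy h
      simpa using this
    let f : G →+ Additive ℂˣ := MonoidHom.toAdditiveRight y.toMonoidHom.toHomUnits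
    have hf : ∀ h ∈ H, f h = 0 := by
      intro h hh
      have : y.toMonoidHom.toHomUnits (Multiplicative.ofAdd h) = 1 := by
        ext
        simpa using hy' ⟨h, hh⟩
      simpa [f, MonoidHom.toAdditiveRight] using congrArg Additive.ofMul this
    let g := QuotientAddGroup.lift H f hf
    refine ⟨AddChar.toAddMonoidHomEquiv.symm ((MonoidHom.toAdditive (Units.coeHom ℂ)).comp g), ?_⟩
    ext x
    simp only [AddChar.toAddMonoidHomEquiv, quotHom, g, f, MonoidHom.toAdditiveRight,
      MonoidHom.toAdditive]
    rfl

lemma resHom_surjective : Function.Surjective (resHom H) := by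
  have : Fintype (G ⧸ H) := Fintype.ofFinite _
  have hker : Nat.card (resHom H).ker = Nat.card (G ⧸ H) := by
    have hset : ((resHom H).ker : Set (AddChar G ℂ)) = Set.range (quotHom H) := by
      ext y
      simp only [SetLike.mem_coe, AddMonoidHom.mem_ker, Set.mem_range]
      rw [← mem_range_quotHom H, AddMonoidHom.mem_range]
    calc Nat.card (resHom H).ker = Nat.card (Set.range (quotHom H)) := by rw [← hset]; rfl
      _ = Nat.card (AddChar (G ⧸ H) ℂ) := Nat.card_range_of_injective (quotHom_injective H)
      _ = Nat.card (G ⧸ H) := by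
          rw [Nat.card_eq_fintype_card, Nat.card_eq_fintype_card, AddChar.card_eq]
  have h1 : Nat.card (AddChar G ℂ) = Nat.card (resHom H).range * Nat.card (resHom H).ker := by
    rw [AddSubgroup.card_eq_card_quotient_mul_card_addSubgroup (resHom H).ker]
    congr 1
    exact Nat.card_congr (QuotientAddGroup.quotientKerEquivRange (resHom H)).toEquiv
  have h2 : Nat.card G = Nat.card (G ⧸ H) * Nat.card H :=
    AddSubgroup.card_eq_card_quotient_mul_card_addSubgroup H
  have hG : Nat.card (AddChar G ℂ) = Nat.card G := by
    rw [Nat.card_eq_fintype_card, Nat.card_eq_fintype_card, AddChar.card_eq]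
  have hQpos : 0 < Nat.card (G ⧸ H) := Nat.card_pos
  have hrange : Nat.card (resHom H).range = Nat.card H := by
    have := h1.symm.trans (hG.trans h2)
    rw [hker] at this
    have := Nat.eq_of_mul_eq_mul_right hQpos (by linarith [this] : Nat.card (resHom H).range
      * Nat.card (G ⧸ H) = Nat.card H * Nat.card (G ⧸ H))
    exact this
  have htop : (resHom H).range = ⊤ := by
    apply AddSubgroup.eq_top_of_card_eq
    rw [hrange, Nat.card_eq_fintype_card (α := AddChar H ℂ), AddChar.card_eq,
      Nat.card_eq_fintype_card]
  exact AddMonoidHom.range_eq_top.1 htop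

variable (T : Finset (AddChar H ℂ))

lemma fiber_eq (w : AddChar H ℂ) {y₀ : AddChar G ℂ} (hy₀ : resHom H y₀ = w) :
    (univ.filter fun y : AddChar G ℂ => resHom H y = w)
      = univ.image fun χ : AddChar (G ⧸ H) ℂ => y₀ + quotHom H χ := by
  ext y
  simp only [mem_filter, mem_univ, true_and, mem_image]
  constructor
  · intro hy
    have : resHom H (y - y₀) = 0 := by rw [map_sub, hy, hy₀, sub_self]
    obtain ⟨χ, hχ⟩ := (mem_range_quotHom H).2 this
    exact ⟨χ, by rw [hχ]; abel⟩
  · rintro ⟨χ, rfl⟩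
    have h0 : resHom H (quotHom H χ) = 0 := (mem_range_quotHom H).1 ⟨χ, rfl⟩
    rw [map_add, hy₀, h0, add_zero]

lemma card_fiber (w : AddChar H ℂ) :
    (univ.filter fun y : AddChar G ℂ => resHom H y = w).card = Nat.card (G ⧸ H) := by
  have : Fintype (G ⧸ H) := Fintype.ofFinite _
  obtain ⟨y₀, hy₀⟩ := resHom_surjective H w
  rw [fiber_eq H w hy₀, card_image_of_injective _
    (fun a b hab => quotHom_injective H (by simpa using hab)),
    card_univ, AddChar.card_eq, Nat.card_eq_fintype_card]

lemma sum_fiber (w : AddChar H ℂ) (x : G) :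
    ∑ y ∈ univ.filter (fun y : AddChar G ℂ => resHom H y = w), y x
      = if hx : x ∈ H then (Nat.card (G ⧸ H) : ℂ) * w ⟨x, hx⟩ else 0 := by
  have : Fintype (G ⧸ H) := Fintype.ofFinite _
  obtain ⟨y₀, hy₀⟩ := resHom_surjective H w
  rw [fiber_eq H w hy₀, sum_image (fun a _ b _ hab =>
    quotHom_injective H (by simpa using hab))]
  have hterm : ∀ χ : AddChar (G ⧸ H) ℂ, (y₀ + quotHom H χ) x
      = y₀ x * χ (QuotientAddGroup.mk' H x) := fun χ => rfl
  simp_rw [hterm, ← mul_sum]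
  by_cases hx : x ∈ H
  · have h0 : (QuotientAddGroup.mk' H : G →+ G ⧸ H) x = 0 :=
      (QuotientAddGroup.eq_zero_iff _).2 hx
    have hy0x : y₀ x = w ⟨x, hx⟩ := by rw [← hy₀]; rfl
    rw [dif_pos hx, h0]
    simp [hy0x, AddChar.card_eq, Nat.card_eq_fintype_card, mul_comm]
  · have h0 : (QuotientAddGroup.mk' H : G →+ G ⧸ H) x ≠ 0 := fun h =>
      hx ((QuotientAddGroup.eq_zero_iff _).1 h)
    rw [dif_neg hx, AddChar.sum_apply_eq_zero_iff_ne_zero.2 h0, mul_zero]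

lemma filter_decomp :
    (univ.filter fun y : AddChar G ℂ => resHom H y ∈ T)
      = T.biUnion fun w => univ.filter fun y : AddChar G ℂ => resHom H y = w := by
  ext y
  simp only [mem_filter, mem_univ, true_and, mem_biUnion]
  exact ⟨fun h => ⟨_, h, rfl⟩, fun ⟨w, hw, h⟩ => h ▸ hw⟩

lemma pairwise_disj : ∀ w ∈ T, ∀ w' ∈ T, w ≠ w' →
    Disjoint (univ.filter fun y : AddChar G ℂ => resHom H y = w)
      (univ.filter fun y : AddChar G ℂ => resHom H y = w') := by
  intro w _ w' _ hne
  simp only [disjoint_left, mem_filter, mem_univ, true_and]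
  rintro y rfl h
  exact hne h

lemma card_T' :
    (univ.filter fun y : AddChar G ℂ => resHom H y ∈ T).card
      = Nat.card (G ⧸ H) * T.card := by
  rw [filter_decomp, card_biUnion (pairwise_disj H T)]
  simp [card_fiber, mul_comm]

lemma sum_T' (x : G) :
    ∑ y ∈ univ.filter (fun y : AddChar G ℂ => resHom H y ∈ T), y x
      = if hx : x ∈ H then (Nat.card (G ⧸ H) : ℂ) * ∑ w ∈ T, w ⟨x, hx⟩ else 0 := by
  rw [filter_decomp, sum_biUnion]
  · by_cases hx : x ∈ H
    · rw [dif_pos hx, mul_sum]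
      exact Finset.sum_congr rfl fun w _ => by rw [sum_fiber, dif_pos hx]
    · rw [dif_neg hx]
      exact Finset.sum_eq_zero fun w _ => by rw [sum_fiber, dif_neg hx]
  · intro w hw w' hw' hne
    exact pairwise_disj H T w hw w' hw' hne

variable (S : Finset H)

lemma count_coe (ξ : H) :
    (((S.image fun v : H => (v : G)) ×ˢ (S.image fun v : H => (v : G))).filter
        fun p => (ξ : G) = p.1 - p.2).card
      = ((S ×ˢ S).filter fun p => ξ = p.1 - p.2).card := by
  refine (Finset.card_bij (fun (p : H × H) _ => ((p.1 : G), (p.2 : G))) ?_ ?_ ?_).symm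
  · rintro ⟨a, b⟩ hp
    rw [mem_filter, mem_product] at hp ⊢
    refine ⟨⟨mem_image.2 ⟨a, hp.1.1, rfl⟩, mem_image.2 ⟨b, hp.1.2, rfl⟩⟩, ?_⟩
    show (ξ : G) = (a : G) - (b : G)
    exact_mod_cast congrArg (Subtype.val) hp.2
  · rintro ⟨a, b⟩ _ ⟨c, d⟩ _ h
    simp only [Prod.mk.injEq] at h ⊢
    exact ⟨Subtype.ext h.1, Subtype.ext h.2⟩
  · rintro ⟨a, b⟩ hp
    rw [mem_filter, mem_product] at hp
    obtain ⟨v, hv, rfl⟩ := mem_image.1 hp.1.1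
    obtain ⟨v', hv', rfl⟩ := mem_image.1 hp.1.2
    refine ⟨(v, v'), mem_filter.2 ⟨mem_product.2 ⟨hv, hv'⟩, ?_⟩, rfl⟩
    have h2 : (ξ : G) = ((v - v' : H) : G) := by push_cast; exact hp.2
    exact Subtype.coe_injective h2

lemma count_notmem {x : G} (hx : x ∉ H) :
    (((S.image fun v : H => (v : G)) ×ˢ (S.image fun v : H => (v : G))).filter
        fun p => x = p.1 - p.2).card = 0 := by
  rw [Finset.card_eq_zero, Finset.filter_eq_empty_iff]
  rintro ⟨a, b⟩ hp
  rw [mem_product] at hp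
  obtain ⟨v, _, rfl⟩ := mem_image.1 hp.1
  obtain ⟨v', _, rfl⟩ := mem_image.1 hp.2
  intro h
  exact hx (h ▸ sub_mem v.2 v'.2)

end FormalDualAux

open FormalDualAux

theorem stmt_8 {G : Type*} [AddCommGroup G] [Fintype G] (H : AddSubgroup G)
    (S : Finset H) (T : Finset (AddChar H ℂ))
    (hS : S.Nonempty) (hT : T.Nonempty) :
    IsFormallyDual S T ↔
      IsFormallyDual (S.image fun v : H => (v : G))
        (Finset.univ.filter fun y : AddChar G ℂ => y.compAddMonoidHom H.subtype ∈ T) := by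
  have hTdef : (Finset.univ.filter fun y : AddChar G ℂ => y.compAddMonoidHom H.subtype ∈ T)
      = univ.filter fun y : AddChar G ℂ => resHom H y ∈ T := rfl
  rw [hTdef]
  unfold IsFormallyDual
  have hc0 : ((Nat.card (G ⧸ H) : ℕ) : ℂ) ≠ 0 := Nat.cast_ne_zero.2 Nat.card_pos.ne'
  have hSc : (S.image fun v : H => (v : G)).card = S.card :=
    card_image_of_injective _ Subtype.coe_injective
  have key : ∀ ξ : H,
      (‖(((univ.filter fun y : AddChar G ℂ => resHom H y ∈ T).card : ℕ) : ℂ)⁻¹ *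
          ∑ y ∈ univ.filter fun y : AddChar G ℂ => resHom H y ∈ T, y (ξ : G)‖ ^ 2 =
        ((S.image fun v : H => (v : G)).card : ℝ)⁻¹ *
          ((((S.image fun v : H => (v : G)) ×ˢ (S.image fun v : H => (v : G))).filter
            fun p => (ξ : G) = p.1 - p.2).card : ℕ))
      ↔ (‖(T.card : ℂ)⁻¹ * ∑ w ∈ T, w ξ‖ ^ 2 =
        (S.card : ℝ)⁻¹ * (((S ×ˢ S).filter fun p => ξ = p.1 - p.2).card : ℕ)) := by
    intro ξ
    have hsum := sum_T' H T (ξ : G)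
    rw [dif_pos ξ.2] at hsum
    have hmem : (⟨(ξ : G), ξ.2⟩ : H) = ξ := rfl
    rw [hmem] at hsum
    rw [card_T' H T, hsum, count_coe H S ξ, hSc]
    have hcanc : (((Nat.card (G ⧸ H) * T.card : ℕ)) : ℂ)⁻¹ *
        ((Nat.card (G ⧸ H) : ℂ) * ∑ w ∈ T, w ξ)
        = (T.card : ℂ)⁻¹ * ∑ w ∈ T, w ξ := by
      push_cast
      rw [mul_inv, mul_mul_mul_comm, inv_mul_cancel₀ hc0, one_mul]
    rw [hcanc]
  constructor
  · intro hFD x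
    by_cases hx : x ∈ H
    · refine (key ⟨x, hx⟩).2 ?_
      have h := hFD ⟨x, hx⟩
      convert h using 4
      congr!
    · have h1 := sum_T' H T x
      rw [dif_neg hx] at h1
      rw [h1, count_notmem H S hx]
      simp
  · intro hFD ξ
    have h := (key ξ).1 (hFD (ξ : G))
    convert h using 4
    congr!
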